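/- Let B be a finite-dimensional F-algebra with semisimple part B̄ and nilpotency index n_B of J(B). Let B' = B̄ * F{x₁,…,x_n} (polynomials in noncommuting variables with coefficients in B̄, n ≥ dim_F J(B)), I₁ the ideal of B' generated by all evaluations of Id(B) on B', I₂ the ideal generated by x₁,…,x_n, and B̂_u = B'/(I₁ + I₂^u). Then: (1) if u ≥ n_B then Id(B̂_u) = Id(B); (2) B̂_u is finite-dimensional over F; (3) the nilpotency index of J(B̂_u) is at most u. -/

import Mathlib

noncomputable section

variable (F : Type) [Field F]

/-- The T-ideal of identities of the F-algebra W. -/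
def IdSet (W : Type) [Ring W] [Algebra F W] : Set (FreeAlgebra F ℕ) :=
  {f | ∀ φ : FreeAlgebra F ℕ →ₐ[F] W, φ f = 0}

/-- I₁: the ideal of B' generated by all evaluations on B' of the identities of B. -/
def Ione (B B' : Type) [Ring B] [Algebra F B] [Ring B'] [Algebra F B'] :
    TwoSidedIdeal B' :=
  TwoSidedIdeal.span {y | ∃ f ∈ IdSet F B, ∃ φ : FreeAlgebra F ℕ →ₐ[F] B', φ f = y}

/-- I₂ᵘ: the u-th power of the ideal I₂ generated by the variables x₁,…,xₙ. -/
def ItwoPow (B' : Type) [Ring B'] {n : ℕ} (X : Fin n → B') (u : ℕ) :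
    TwoSidedIdeal B' :=
  TwoSidedIdeal.span {z | ∃ g : Fin u → B',
    (∀ i, g i ∈ TwoSidedIdeal.span (Set.range X)) ∧ z = (List.ofFn g).prod}

/-- B̂_u = B'/(I₁ + I₂ᵘ). -/
abbrev Bhat (B B' : Type) [Ring B] [Algebra F B] [Ring B'] [Algebra F B'] {n : ℕ}
    (X : Fin n → B') (u : ℕ) : Type :=
  (Ione F B B' ⊔ ItwoPow B' X u).ringCon.Quotient

end

noncomputable section stmtaux

theorem jac_bot_ss (R : Type*) [Ring R] [IsSemisimpleRing R] :
    (⊥ : Ideal R).jacobson = ⊥ := by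
  obtain ⟨c, hc⟩ := exists_isCompl ((⊥ : Ideal R).jacobson)
  rcases eq_or_ne c ⊤ with h | h
  · have := hc.disjoint
    rw [h, disjoint_top] at this
    exact this
  · obtain ⟨m, hm, hcm⟩ := Ideal.exists_le_maximal c h
    have h1 : (⊥ : Ideal R).jacobson ≤ m := sInf_le ⟨bot_le, hm⟩
    have h2 : (⊤ : Ideal R) ≤ m := by
      rw [← hc.sup_eq_top]; exact sup_le h1 hcm
    exact absurd (top_le_iff.mp h2) hm.ne_top

def liftAlgHom' {F B' C : Type*} [CommSemiring F] [Ring B'] [Algebra F B'] [Ring C]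
    [Algebra F C] (I : TwoSidedIdeal B') (f : B' →ₐ[F] C) (hf : ∀ x ∈ I, f x = 0) :
    I.ringCon.Quotient →ₐ[F] C where
  toFun := fun q => Quotient.liftOn' q f (fun a b hab => by
    have h : a - b ∈ I := (I.rel_iff a b).1 hab
    have := hf _ h
    rw [map_sub, sub_eq_zero] at this
    exact this)
  map_one' := map_one f
  map_mul' := fun a b => Quotient.ind₂' (fun a b => map_mul f a b) a b
  map_zero' := map_zero f
  map_add' := fun a b => Quotient.ind₂' (fun a b => map_add f a b) a b
  commutes' := fun r => f.commutes r

@[simp] lemma liftAlgHom'_mk {F B' C : Type*} [CommSemiring F] [Ring B'] [Algebra F B'] [Ring C]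
    [Algebra F C] (I : TwoSidedIdeal B') (f : B' →ₐ[F] C) (hf) (x : B') :
    liftAlgHom' I f hf (x : I.ringCon.Quotient) = f x := rfl

variable {F : Type} [Field F] {B : Type} [Ring B] [Algebra F B]
  {B' : Type} [Ring B'] [Algebra F B'] {n : ℕ} {X : Fin n → B'} {u : ℕ}

def piHat (F : Type) [Field F] (B B' : Type) [Ring B] [Algebra F B] [Ring B'] [Algebra F B']
    {n : ℕ} (X : Fin n → B') (u : ℕ) : B' →ₐ[F] Bhat F B B' X u :=
  { (Ione F B B' ⊔ ItwoPow B' X u).ringCon.mk' with commutes' := fun _ => rfl }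

lemma piHat_surjective : Function.Surjective (piHat F B B' X u) :=
  fun q => Quotient.inductionOn' q fun b => ⟨b, rfl⟩

lemma piHat_zero_iff (x : B') :
    piHat F B B' X u x = 0 ↔ x ∈ Ione F B B' ⊔ ItwoPow B' X u := by
  constructor
  · intro h
    have : x ∈ TwoSidedIdeal.ker (Ione F B B' ⊔ ItwoPow B' X u).ringCon.mk' :=
      (TwoSidedIdeal.mem_ker _).2 h
    rwa [TwoSidedIdeal.ker_ringCon_mk'] at this
  · intro h
    have : x ∈ TwoSidedIdeal.ker (Ione F B B' ⊔ ItwoPow B' X u).ringCon.mk' := by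
      rwa [TwoSidedIdeal.ker_ringCon_mk']
    exact (TwoSidedIdeal.mem_ker _).1 this

def tsub (F : Type) [Field F] {B' : Type} [Ring B'] [Algebra F B'] (T : TwoSidedIdeal B') :
    Submodule F B' :=
  Submodule.restrictScalars F (TwoSidedIdeal.asIdeal T)

@[simp] lemma mem_tsub {T : TwoSidedIdeal B'} {x : B'} : x ∈ tsub F T ↔ x ∈ T := by
  simp [tsub]

lemma one_mem_ItwoPow_zero : (1 : B') ∈ ItwoPow B' X 0 :=
  TwoSidedIdeal.subset_span ⟨Fin.elim0, fun i => i.elim0, by simp⟩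

lemma mul_ItwoPow {k : ℕ} {a z : B'} (ha : a ∈ TwoSidedIdeal.span (Set.range X))
    (hz : z ∈ ItwoPow B' X k) : a * z ∈ ItwoPow B' X (k + 1) := by
  let T : TwoSidedIdeal B' := TwoSidedIdeal.mk'
    {z | ∀ a ∈ TwoSidedIdeal.span (Set.range X), a * z ∈ ItwoPow B' X (k + 1)}
    (by intro a _; simp)
    (by intro x y hx hy a ha
        rw [mul_add]
        exact TwoSidedIdeal.add_mem _ (hx a ha) (hy a ha))
    (by intro x hx a ha
        rw [mul_neg]
        exact TwoSidedIdeal.neg_mem _ (hx a ha))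
    (by intro x y hy a ha
        rw [← mul_assoc]
        exact hy _ (TwoSidedIdeal.mul_mem_right _ _ _ ha))
    (by intro x y hx a ha
        rw [← mul_assoc]
        exact TwoSidedIdeal.mul_mem_right _ _ _ (hx a ha))
  have hsub : {z : B' | ∃ g : Fin k → B',
      (∀ i, g i ∈ TwoSidedIdeal.span (Set.range X)) ∧ z = (List.ofFn g).prod} ⊆ T := by
    rintro z ⟨g, hg, rfl⟩
    refine (TwoSidedIdeal.mem_mk' _ _ _ _ _ _ _).2 ?_
    intro a ha
    refine TwoSidedIdeal.subset_span ⟨Fin.cons a g, ?_, ?_⟩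
    · intro i
      refine Fin.cases ?_ ?_ i
      · simpa using ha
      · intro j; simpa using hg j
    · rw [List.ofFn_succ]
      simp
  have hzT : z ∈ T := TwoSidedIdeal.mem_span_iff.1 hz T hsub
  exact (TwoSidedIdeal.mem_mk' _ _ _ _ _ _ _).1 hzT a ha

lemma prod_mem_span_of_ne_nil {l : List B'} (h : l ≠ [])
    (hmem : ∀ x ∈ l, x ∈ TwoSidedIdeal.span (Set.range X)) :
    l.prod ∈ TwoSidedIdeal.span (Set.range X) := by
  cases l with
  | nil => exact absurd rfl h
  | cons y t =>
    rw [List.prod_cons]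
    exact TwoSidedIdeal.mul_mem_right _ _ _ (hmem y (List.mem_cons_self (a := y) (l := t)))

lemma mem_sup_decomp {R : Type*} [Ring R] (I J : TwoSidedIdeal R) {y : R} (hy : y ∈ I ⊔ J) :
    ∃ a ∈ I, ∃ c ∈ J, y = a + c := by
  let T : TwoSidedIdeal R := TwoSidedIdeal.mk' {y | ∃ a ∈ I, ∃ c ∈ J, y = a + c}
    ⟨0, I.zero_mem, 0, J.zero_mem, by simp⟩
    (by rintro x y ⟨a, ha, c, hc, rfl⟩ ⟨a', ha', c', hc', rfl⟩
        exact ⟨a + a', I.add_mem ha ha', c + c', J.add_mem hc hc', by abel⟩)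
    (by rintro x ⟨a, ha, c, hc, rfl⟩
        exact ⟨-a, I.neg_mem ha, -c, J.neg_mem hc, by abel⟩)
    (by rintro x y ⟨a, ha, c, hc, rfl⟩
        exact ⟨x * a, I.mul_mem_left _ _ ha, x * c, J.mul_mem_left _ _ hc, mul_add x a c⟩)
    (by rintro x y ⟨a, ha, c, hc, rfl⟩
        exact ⟨a * y, I.mul_mem_right _ _ ha, c * y, J.mul_mem_right _ _ hc, add_mul a c y⟩)
  have : y ∈ T := by
    refine (sup_le (fun z hz => ?_) (fun z hz => ?_) : I ⊔ J ≤ T) hy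
    · exact (TwoSidedIdeal.mem_mk' _ _ _ _ _ _ _).2 ⟨z, hz, 0, J.zero_mem, by simp⟩
    · exact (TwoSidedIdeal.mem_mk' _ _ _ _ _ _ _).2 ⟨0, I.zero_mem, z, hz, by simp⟩
  rwa [TwoSidedIdeal.mem_mk'] at this

lemma prod_mem_Ione_sup {l : List B'}
    (hmem : ∀ y ∈ l, y ∈ Ione F B B' ⊔ TwoSidedIdeal.span (Set.range X)) :
    l.prod ∈ Ione F B B' ⊔ ItwoPow B' X l.length := by
  induction l with
  | nil =>
    rw [List.prod_nil]
    exact le_sup_right (α := TwoSidedIdeal B') one_mem_ItwoPow_zero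
  | cons y t ih =>
    obtain ⟨a, ha, c, hc, rfl⟩ := mem_sup_decomp _ _ (hmem _ (List.mem_cons_self (a := y) (l := t)))
    obtain ⟨a', ha', c', hc', hp⟩ := mem_sup_decomp _ _ (ih fun z hz => hmem z (List.mem_cons_of_mem _ hz))
    rw [List.prod_cons, hp, List.length_cons]
    have h1 : (a + c) * (a' + c') = a * (a' + c') + c * a' + c * c' := by noncomm_ring
    rw [h1]
    refine TwoSidedIdeal.add_mem _ (TwoSidedIdeal.add_mem _ ?_ ?_) ?_
    · exact le_sup_left (α := TwoSidedIdeal B') (TwoSidedIdeal.mul_mem_right _ _ _ ha)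
    · exact le_sup_left (α := TwoSidedIdeal B') (TwoSidedIdeal.mul_mem_left _ _ _ ha')
    · exact le_sup_right (α := TwoSidedIdeal B') (mul_ItwoPow hc hc')


lemma gen_ind {S : Type} [Ring S] [Algebra F S] (ιS : S →ₐ[F] B')
    (huniv : ∀ (C : Type) [Ring C] [Algebra F C] (g : S →ₐ[F] C) (y : Fin n → C),
      ∃! φ : B' →ₐ[F] C, (∀ s, φ (ιS s) = g s) ∧ ∀ i, φ (X i) = y i)
    (W : Submodule F B') (h1 : (1 : B') ∈ W)
    (hS : ∀ b ∈ W, ∀ s, b * ιS s ∈ W) (hX : ∀ b ∈ W, ∀ i, b * X i ∈ W) :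
    ∀ b, b ∈ W := by
  intro b
  set gens : Set B' := Set.range (fun s => ιS s) ∪ Set.range X with hgens
  have hmemS : ∀ s : S, ιS s ∈ Algebra.adjoin F gens :=
    fun s => Algebra.subset_adjoin (Or.inl ⟨s, rfl⟩)
  have hmemX : ∀ i, X i ∈ Algebra.adjoin F gens :=
    fun i => Algebra.subset_adjoin (Or.inr ⟨i, rfl⟩)
  obtain ⟨φ, ⟨hφ1, hφ2⟩, -⟩ := huniv (Algebra.adjoin F gens)
    (AlgHom.codRestrict ιS _ hmemS) (fun i => ⟨X i, hmemX i⟩)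
  obtain ⟨ψ, _, huniq⟩ := huniv B' ιS X
  have e1 : (Algebra.adjoin F gens).val.comp φ = ψ := by
    apply huniq
    constructor
    · intro s
      exact congrArg Subtype.val (hφ1 s)
    · intro i
      exact congrArg Subtype.val (hφ2 i)
  have e2 : AlgHom.id F B' = ψ := huniq _ ⟨fun s => rfl, fun i => rfl⟩
  have hbA : b ∈ Algebra.adjoin F gens := by
    have h3 : (Algebra.adjoin F gens).val.comp φ b = b := by
      rw [e1, ← e2]; rfl
    rw [← h3]
    exact (φ b).2
  have hb2 : b ∈ Submodule.span F (Submonoid.closure gens : Set B') := by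
    rw [← Algebra.adjoin_eq_span]
    exact hbA
  refine Submodule.span_le.2 ?_ hb2
  intro x hx
  refine Submonoid.closure_induction_right (motive := fun m _ => m ∈ W) h1 ?_ hx
  rintro z hz y (⟨s, rfl⟩ | ⟨i, rfl⟩) hzW
  · exact hS z hzW s
  · exact hX z hzW i

lemma bhat_findim {S : Type} [Ring S] [Algebra F S] [Module.Finite F S] (ιS : S →ₐ[F] B')
    (huniv : ∀ (C : Type) [Ring C] [Algebra F C] (g : S →ₐ[F] C) (y : Fin n → C),
      ∃! φ : B' →ₐ[F] C, (∀ s, φ (ιS s) = g s) ∧ ∀ i, φ (X i) = y i)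
    (u : ℕ) : FiniteDimensional F (Bhat F B B' X u) := by
  classical
  set M0 : Submodule F B' := LinearMap.range ιS.toLinearMap with hM0def
  set V : Submodule F B' := Submodule.span F (Set.range X) with hVdef
  set Mk : ℕ → Submodule F B' := fun k => M0 * (V * M0) ^ k with hMkdef
  set N : Submodule F B' := ⨆ k : Fin u, Mk k with hNdef
  set I2u : Submodule F B' := tsub F (ItwoPow B' X u) with hI2udef
  have hM0M0 : M0 * M0 ≤ M0 := by
    rw [Submodule.mul_le]
    rintro m ⟨s, rfl⟩ m' ⟨s', rfl⟩
    exact ⟨s * s', by simp⟩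
  have h1M0 : (1 : B') ∈ M0 := ⟨1, by simp⟩
  have hVI : V ≤ tsub F (TwoSidedIdeal.span (Set.range X)) :=
    Submodule.span_le.2 (fun x hx => by simpa using TwoSidedIdeal.subset_span hx)
  have hVM0I : V * M0 ≤ tsub F (TwoSidedIdeal.span (Set.range X)) := by
    rw [Submodule.mul_le]
    intro v hv m hm
    exact (mem_tsub (F := F)).2 (TwoSidedIdeal.mul_mem_right _ _ _ ((mem_tsub (F := F)).1 (hVI hv)))
  have hpow : ∀ k, ((V * M0) ^ k : Submodule F B') ≤ tsub F (ItwoPow B' X k) := by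
    intro k
    induction k with
    | zero =>
      rw [pow_zero]
      rw [Submodule.one_le]
      simpa using one_mem_ItwoPow_zero
    | succ k ih =>
      rw [pow_succ']
      refine Submodule.mul_le.2 ?_
      intro m hm z hz
      simpa using mul_ItwoPow (by simpa using hVM0I hm) (by simpa using ih hz)
  have hMkM0 : ∀ k, Mk k * M0 ≤ Mk k := by
    intro k
    cases k with
    | zero =>
      simpa [hMkdef, pow_zero, mul_one] using hM0M0
    | succ k =>
      have h1 : ((V * M0) ^ (k + 1) : Submodule F B') * M0 ≤ (V * M0) ^ (k + 1) :=
        calc ((V * M0) ^ (k + 1) : Submodule F B') * M0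
            = (V * M0) ^ k * (V * (M0 * M0)) := by rw [pow_succ, mul_assoc, mul_assoc]
          _ ≤ (V * M0) ^ k * (V * M0) :=
              mul_le_mul_right (mul_le_mul_right hM0M0 _) _
          _ = (V * M0) ^ (k + 1) := (pow_succ _ _).symm
      calc Mk (k+1) * M0 = M0 * ((V * M0) ^ (k+1) * M0) := by rw [hMkdef, mul_assoc]
        _ ≤ M0 * (V * M0) ^ (k+1) := mul_le_mul_right h1 _
        _ = Mk (k+1) := rfl
  have hMkV : ∀ k, Mk k * V ≤ Mk (k + 1) := by
    intro k
    have hV1 : V ≤ V * M0 := by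
      conv_lhs => rw [← mul_one V]
      exact mul_le_mul_right (Submodule.one_le.2 h1M0) _
    calc Mk k * V = M0 * ((V * M0) ^ k * V) := by rw [hMkdef, mul_assoc]
      _ ≤ M0 * ((V * M0) ^ k * (V * M0)) :=
          mul_le_mul_right (mul_le_mul_right hV1 _) _
      _ = Mk (k + 1) := by rw [hMkdef, ← pow_succ]
  have hMku : Mk u ≤ I2u := by
    rw [hMkdef, hI2udef]
    refine Submodule.mul_le.2 ?_
    intro m hm z hz
    simpa using TwoSidedIdeal.mul_mem_left _ _ _ (by simpa using hpow u hz)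
  have hW1 : (1 : B') ∈ N ⊔ I2u := by
    rcases Nat.eq_zero_or_pos u with hu | hu
    · refine Submodule.mem_sup_right ?_
      rw [hI2udef, hu]
      simpa using one_mem_ItwoPow_zero
    · refine Submodule.mem_sup_left ?_
      have hle := le_iSup (fun k : Fin u => Mk k) ⟨0, hu⟩
      refine hle ?_
      show (1 : B') ∈ M0 * (V * M0) ^ (0 : ℕ)
      rw [pow_zero, mul_one]
      exact h1M0
  have hWM0 : (N ⊔ I2u) * M0 ≤ N ⊔ I2u := by
    rw [Submodule.sup_mul]
    refine sup_le ?_ ?_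
    · rw [hNdef, Submodule.iSup_mul]
      refine iSup_le fun k => ?_
      exact le_sup_left.trans' ((hMkM0 k).trans (le_iSup (fun k : Fin u => Mk k) k))
    · refine le_sup_right.trans' ?_
      rw [hI2udef]
      refine Submodule.mul_le.2 ?_
      intro z hz m hm
      simpa using TwoSidedIdeal.mul_mem_right _ _ _ (by simpa using hz)
  have hWV : (N ⊔ I2u) * V ≤ N ⊔ I2u := by
    rw [Submodule.sup_mul]
    refine sup_le ?_ ?_
    · rw [hNdef, Submodule.iSup_mul]
      refine iSup_le fun k => ?_
      refine (hMkV k).trans ?_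
      rcases lt_or_ge ((k : ℕ) + 1) u with h | h
      · exact le_sup_left.trans' (le_iSup (fun k : Fin u => Mk k) ⟨(k : ℕ) + 1, h⟩)
      · have hku : (k : ℕ) + 1 = u := le_antisymm k.isLt h
        rw [hku]
        exact le_sup_right.trans' hMku
    · refine le_sup_right.trans' ?_
      rw [hI2udef]
      refine Submodule.mul_le.2 ?_
      intro z hz v hv
      simpa using TwoSidedIdeal.mul_mem_right _ _ _ (by simpa using hz)
  have htop : ∀ b : B', b ∈ N ⊔ I2u := by
    refine gen_ind ιS huniv _ hW1 ?_ ?_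
    · intro b hb s
      exact hWM0 (Submodule.mul_mem_mul hb ⟨s, rfl⟩)
    · intro b hb i
      exact hWV (Submodule.mul_mem_mul hb (Submodule.subset_span ⟨i, rfl⟩))
  have hM0fg : M0.FG := by
    rw [hM0def, LinearMap.range_eq_map]
    exact (Module.finite_def.1 inferInstance).map _
  have hVfg : V.FG := Submodule.fg_span (Set.finite_range X)
  have hNfg : N.FG := by
    have h := Submodule.fg_finset_sup (Finset.univ : Finset (Fin u)) (fun k => Mk k)
      (fun i _ => hM0fg.mul ((hVfg.mul hM0fg).pow _))
    rwa [Finset.sup_univ_eq_iSup] at h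
  have : Module.Finite F (Bhat F B B' X u) := by
    rw [Module.finite_def]
    set π' := (piHat F B B' X u).toLinearMap with hπ'
    have htopmap : Submodule.map π' ⊤ = ⊤ := by
      rw [Submodule.map_top, LinearMap.range_eq_top]
      exact piHat_surjective
    have hI2u0 : Submodule.map π' I2u ≤ ⊥ := by
      rintro _ ⟨z, hz, rfl⟩
      simp only [Submodule.mem_bot]
      exact (piHat_zero_iff z).2 (le_sup_right (α := TwoSidedIdeal B') ((mem_tsub (F := F) (T := ItwoPow B' X u)).1 hz))
    have h3 : (⊤ : Submodule F (Bhat F B B' X u)) = Submodule.map π' N := by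
      refine le_antisymm ?_ le_top
      rw [← htopmap]
      have h4 : Submodule.map π' ⊤ ≤ Submodule.map π' (N ⊔ I2u) :=
        Submodule.map_mono (fun b _ => htop b)
      refine h4.trans ?_
      rw [Submodule.map_sup]
      exact sup_le le_rfl (hI2u0.trans bot_le)
    rw [h3]
    exact hNfg.map _
  exact this

end stmtaux


/-- let B be a finite-dimensional F-algebra with maximal semisimple subalgebra B̄
and nilpotency index n_B of J(B), and let B' = B̄ * F{x₁,…,xₙ} (the free product, i.e. the
coproduct of B̄ and the free algebra on n ≥ dim_F J(B) variables, given here by its universal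
property).  Let I₁ be the ideal of B' generated by all evaluations of Id(B) on B', I₂ the
ideal generated by x₁,…,xₙ, and B̂_u = B'/(I₁ + I₂ᵘ).  Then:
(1) if u ≥ n_B then Id(B̂_u) = Id(B);
(2) B̂_u is finite-dimensional over F;
(3) the nilpotency index of J(B̂_u) is at most u. -/
theorem stmt_18 (F : Type) [Field F] (B : Type) [Ring B] [Algebra F B]
    [FiniteDimensional F B]
    (Sb : Subalgebra F B) (hss : IsSemisimpleRing ↥Sb)
    (hcompl : ∀ b : B, ∃ s ∈ Sb, ∃ r ∈ (⊥ : Ideal B).jacobson, b = s + r)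
    (hdisj : ∀ b ∈ Sb, b ∈ (⊥ : Ideal B).jacobson → b = 0)
    (nB : ℕ)
    (hnil : ∀ l : List B, (∀ x ∈ l, x ∈ (⊥ : Ideal B).jacobson) → l.length = nB →
      l.prod = 0)
    (hnB : ∃ l : List B, (∀ x ∈ l, x ∈ (⊥ : Ideal B).jacobson) ∧ l.length + 1 = nB ∧
      l.prod ≠ 0)
    (n : ℕ)
    (hn : Module.finrank F ↥(Submodule.restrictScalars F ((⊥ : Ideal B).jacobson)) ≤ n)
    (B' : Type) [Ring B'] [Algebra F B'] (ιS : ↥Sb →ₐ[F] B') (X : Fin n → B')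
    (huniv : ∀ (C : Type) [Ring C] [Algebra F C] (g : ↥Sb →ₐ[F] C) (y : Fin n → C),
      ∃! φ : B' →ₐ[F] C, (∀ s, φ (ιS s) = g s) ∧ ∀ i, φ (X i) = y i)
    (u : ℕ) :
    (nB ≤ u → IdSet F (Bhat F B B' X u) = IdSet F B) ∧
    FiniteDimensional F (Bhat F B B' X u) ∧
    (∀ l : List (Bhat F B B' X u),
      (∀ x ∈ l, x ∈ (⊥ : Ideal (Bhat F B B' X u)).jacobson) → l.length = u →
      l.prod = 0) := by
  classical
  haveI hSbfin : Module.Finite F ↥Sb := inferInstance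
  have hπsurj : Function.Surjective (piHat F B B' X u) := piHat_surjective
  rcases Nat.eq_zero_or_pos u with hu0 | hu0
  · subst hu0
    have h10 : (1 : Bhat F B B' X 0) = 0 := by
      have h1 : piHat F B B' X 0 1 = 0 :=
        (piHat_zero_iff 1).2 (le_sup_right (α := TwoSidedIdeal B') one_mem_ItwoPow_zero)
      rwa [map_one] at h1
    haveI hsub : Subsingleton (Bhat F B B' X 0) := subsingleton_of_zero_eq_one h10.symm
    refine ⟨?_, bhat_findim ιS huniv 0, ?_⟩
    · intro hnB0
      obtain ⟨l, -, hl, -⟩ := hnB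
      omega
    · intro l _ _
      exact Subsingleton.elim _ _
  have part1 : nB ≤ u → IdSet F (Bhat F B B' X u) = IdSet F B := by
    intro hnBu
    set Jmod := Submodule.restrictScalars F ((⊥ : Ideal B).jacobson) with hJmod
    set d := Module.finrank F ↥Jmod with hd
    set bb := Module.finBasis F ↥Jmod with hbb
    have hdn : d ≤ n := hn
    set r : Fin n → B := fun i => if h : (i : ℕ) < d then (bb ⟨i, h⟩ : B) else 0 with hr
    have hrJ : ∀ i, r i ∈ (⊥ : Ideal B).jacobson := by
      intro i
      rw [hr]
      dsimp only
      split
      · exact (bb _).2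
      · exact Submodule.zero_mem _
    have hrspan : ∀ x ∈ (⊥ : Ideal B).jacobson, x ∈ Submodule.span F (Set.range r) := by
      intro x hx
      have h1 : (⟨x, hx⟩ : ↥Jmod) ∈ Submodule.span F (Set.range bb) := by
        rw [bb.span_eq]; trivial
      have h2 : x ∈ Submodule.map Jmod.subtype (Submodule.span F (Set.range bb)) :=
        ⟨_, h1, rfl⟩
      rw [Submodule.map_span] at h2
      refine Submodule.span_mono ?_ h2
      rintro _ ⟨_, ⟨j, rfl⟩, rfl⟩
      refine ⟨⟨(j : ℕ), lt_of_lt_of_le j.isLt hdn⟩, ?_⟩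
      rw [hr]
      dsimp only
      rw [dif_pos j.isLt]
      rfl
    obtain ⟨θ, ⟨hθS, hθX⟩, -⟩ := huniv B Sb.val r
    have hθK : ∀ x ∈ Ione F B B' ⊔ ItwoPow B' X u, θ x = 0 := by
      intro x hx
      have hle : Ione F B B' ⊔ ItwoPow B' X u ≤ TwoSidedIdeal.ker θ := by
        refine sup_le ?_ ?_
        · intro y hy
          refine TwoSidedIdeal.mem_span_iff.1 hy _ ?_
          rintro _ ⟨f, hf, φ, rfl⟩
          refine (TwoSidedIdeal.mem_ker _).2 ?_
          have h6 := hf (θ.comp φ)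
          simpa using h6
        · intro y hy
          refine TwoSidedIdeal.mem_span_iff.1 hy _ ?_
          rintro _ ⟨g, hg, rfl⟩
          refine (TwoSidedIdeal.mem_ker _).2 ?_
          have hθg : ∀ i, θ (g i) ∈ (⊥ : Ideal B).jacobson := by
            intro i
            let Tj : TwoSidedIdeal B' := TwoSidedIdeal.mk'
              {b | θ b ∈ (⊥ : Ideal B).jacobson}
              (by simp only [Set.mem_setOf_eq, map_zero]; exact Submodule.zero_mem _)
              (by intro a b ha hb
                  simp only [Set.mem_setOf_eq, map_add] at ha hb ⊢
                  exact Submodule.add_mem _ ha hb)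
              (by intro a ha
                  simp only [Set.mem_setOf_eq, map_neg] at ha ⊢
                  exact Submodule.neg_mem _ ha)
              (by intro a b hb
                  simp only [Set.mem_setOf_eq, map_mul] at hb ⊢
                  exact Ideal.mul_mem_left _ _ hb)
              (by intro a b ha
                  simp only [Set.mem_setOf_eq, map_mul] at ha ⊢
                  exact Ideal.mul_mem_right _ _ ha)
            have h7 : g i ∈ Tj := by
              refine TwoSidedIdeal.mem_span_iff.1 (hg i) Tj ?_
              rintro _ ⟨j, rfl⟩
              refine (TwoSidedIdeal.mem_mk' _ _ _ _ _ _ _).2 ?_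
              simp only [Set.mem_setOf_eq]
              rw [hθX j]
              exact hrJ j
            have h7' := (TwoSidedIdeal.mem_mk' _ _ _ _ _ _ _).1 h7
            exact h7'
          have h8 : θ (List.ofFn g).prod = (List.ofFn (fun i => θ (g i))).prod := by
            rw [map_list_prod, List.map_ofFn]
            rfl
          rw [h8]
          set l := List.ofFn (fun i => θ (g i)) with hldef
          have hlen : l.length = u := by simp [hldef]
          have h9 : (l.take nB).prod = 0 := by
            refine hnil _ ?_ ?_
            · intro z hz
              obtain ⟨i, rfl⟩ := List.mem_ofFn.1 (List.take_subset _ _ hz)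
              exact hθg i
            · rw [List.length_take, hlen]
              exact min_eq_left hnBu
          calc l.prod = (l.take nB).prod * (l.drop nB).prod :=
                (List.prod_take_mul_prod_drop l nB).symm
            _ = 0 := by rw [h9, zero_mul]
      exact (TwoSidedIdeal.mem_ker _).1 (hle hx)
    set θhat : Bhat F B B' X u →ₐ[F] B := liftAlgHom' _ θ hθK with hθhatdef
    have hθhatπ : ∀ y : B', θhat (piHat F B B' X u y) = θ y := fun y => rfl
    have hθhatsurj : Function.Surjective θhat := by
      intro b
      obtain ⟨s, hs, rr, hrr, rfl⟩ := hcompl b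
      have h1 : s ∈ θ.range := ⟨ιS ⟨s, hs⟩, hθS ⟨s, hs⟩⟩
      have h2 : rr ∈ θ.range := by
        have h3 : Submodule.span F (Set.range r) ≤ Subalgebra.toSubmodule θ.range := by
          rw [Submodule.span_le]
          rintro _ ⟨i, rfl⟩
          exact ⟨X i, hθX i⟩
        exact h3 (hrspan rr hrr)
      obtain ⟨y, hy⟩ := add_mem h1 h2
      have hy' : θ y = s + rr := hy
      exact ⟨piHat F B B' X u y, by rw [hθhatπ, hy']⟩
    apply Set.Subset.antisymm
    · intro f hf
      intro ψ
      set χ : FreeAlgebra F ℕ →ₐ[F] Bhat F B B' X u :=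
        FreeAlgebra.lift F (fun m : ℕ => Classical.choose (hθhatsurj (ψ (FreeAlgebra.ι F m))))
        with hχdef
      have hχ : θhat.comp χ = ψ := by
        apply FreeAlgebra.hom_ext
        funext m
        show θhat (χ (FreeAlgebra.ι F m)) = ψ (FreeAlgebra.ι F m)
        rw [hχdef]
        rw [FreeAlgebra.lift_ι_apply]
        exact Classical.choose_spec (hθhatsurj (ψ (FreeAlgebra.ι F m)))
      calc ψ f = θhat (χ f) := by rw [← hχ]; rfl
        _ = 0 := by rw [hf χ, map_zero]
    · intro f hf
      intro ψ
      set χ : FreeAlgebra F ℕ →ₐ[F] B' :=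
        FreeAlgebra.lift F (fun m : ℕ => Classical.choose (hπsurj (ψ (FreeAlgebra.ι F m))))
        with hχdef
      have hχ : (piHat F B B' X u).comp χ = ψ := by
        apply FreeAlgebra.hom_ext
        funext m
        show piHat F B B' X u (χ (FreeAlgebra.ι F m)) = ψ (FreeAlgebra.ι F m)
        rw [hχdef, FreeAlgebra.lift_ι_apply]
        exact Classical.choose_spec (hπsurj (ψ (FreeAlgebra.ι F m)))
      have hmem : χ f ∈ Ione F B B' := TwoSidedIdeal.subset_span ⟨f, hf, χ, rfl⟩
      calc ψ f = piHat F B B' X u (χ f) := by rw [← hχ]; rfl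
        _ = 0 := (piHat_zero_iff _).2 (le_sup_left (α := TwoSidedIdeal B') hmem)
  have part3 : ∀ l : List (Bhat F B B' X u),
      (∀ x ∈ l, x ∈ (⊥ : Ideal (Bhat F B B' X u)).jacobson) → l.length = u →
      l.prod = 0 := by
    set L : TwoSidedIdeal B' := Ione F B B' ⊔ TwoSidedIdeal.span (Set.range X) with hLdef
    have hKL : Ione F B B' ⊔ ItwoPow B' X u ≤ L := by
      refine sup_le le_sup_left ?_
      intro z hz
      refine TwoSidedIdeal.mem_span_iff.1 hz _ ?_
      rintro _ ⟨g, hg, rfl⟩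
      refine le_sup_right (α := TwoSidedIdeal B') ?_
      refine prod_mem_span_of_ne_nil ?_ ?_
      · intro hnil'
        have h2 := congrArg List.length hnil'
        simp at h2
        omega
      · intro x hx
        obtain ⟨i, rfl⟩ := List.mem_ofFn.1 hx
        exact hg i
    set ρ0 : B' →ₐ[F] L.ringCon.Quotient :=
      { L.ringCon.mk' with commutes' := fun _ => rfl } with hρ0def
    have hρ0surj : Function.Surjective ρ0 := fun q => Quotient.inductionOn' q fun b => ⟨b, rfl⟩
    have hρ0ker : ∀ x : B', ρ0 x = 0 ↔ x ∈ L := by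
      intro x
      constructor
      · intro h
        have h2 : x ∈ TwoSidedIdeal.ker L.ringCon.mk' := (TwoSidedIdeal.mem_ker _).2 h
        rwa [TwoSidedIdeal.ker_ringCon_mk'] at h2
      · intro h
        have h2 : x ∈ TwoSidedIdeal.ker L.ringCon.mk' := by
          rwa [TwoSidedIdeal.ker_ringCon_mk']
        exact (TwoSidedIdeal.mem_ker _).1 h2
    set ρ : Bhat F B B' X u →ₐ[F] L.ringCon.Quotient :=
      liftAlgHom' _ ρ0 (fun x hx => (hρ0ker x).2 (hKL hx)) with hρdef
    have hρπ : ∀ y : B', ρ (piHat F B B' X u y) = ρ0 y := fun y => rfl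
    have hρsurj : Function.Surjective ρ := by
      intro q
      obtain ⟨y, rfl⟩ := hρ0surj q
      exact ⟨piHat F B B' X u y, rfl⟩
    set τ : ↥Sb →ₐ[F] L.ringCon.Quotient := ρ0.comp ιS with hτdef
    have hτρ0 : ∀ s, τ s = ρ0 (ιS s) := fun s => rfl
    have hτsurj : Function.Surjective τ := by
      intro q
      obtain ⟨b, rfl⟩ := hρ0surj q
      have hW : b ∈ Submodule.comap ρ0.toLinearMap (Subalgebra.toSubmodule τ.range) := by
        refine gen_ind ιS huniv _ ?_ ?_ ?_ b
        · refine Submodule.mem_comap.2 ?_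
          show ρ0 1 ∈ τ.range
          rw [map_one]
          exact ⟨1, map_one τ⟩
        · intro c hc s
          obtain ⟨t, ht⟩ := Submodule.mem_comap.1 hc
          have ht' : τ t = ρ0 c := ht
          refine Submodule.mem_comap.2 ?_
          show ρ0 (c * ιS s) ∈ τ.range
          rw [map_mul]
          exact ⟨t * s, by show τ (t * s) = ρ0 c * ρ0 (ιS s); rw [map_mul, ht', hτρ0]⟩
        · intro c hc i
          refine Submodule.mem_comap.2 ?_
          show ρ0 (c * X i) ∈ τ.range
          rw [map_mul, (hρ0ker (X i)).2, mul_zero]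
          · exact ⟨0, map_zero τ⟩
          · exact le_sup_right (α := TwoSidedIdeal B')
              (TwoSidedIdeal.subset_span ⟨i, rfl⟩)
      obtain ⟨t, ht⟩ := Submodule.mem_comap.1 hW
      exact ⟨t, ht⟩
    haveI : IsSemisimpleRing ↥Sb := hss
    haveI hssQ2 : IsSemisimpleRing L.ringCon.Quotient :=
      τ.toRingHom.isSemisimpleRing_of_surjective hτsurj
    have hjac2 : (⊥ : Ideal L.ringCon.Quotient).jacobson = ⊥ := jac_bot_ss _
    have hmap : ∀ x ∈ (⊥ : Ideal (Bhat F B B' X u)).jacobson, ρ x = 0 := by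
      intro x hx
      have h1 : ((⊥ : Ideal (Bhat F B B' X u))).jacobson ≤
          (Ideal.comap ρ.toRingHom (⊥ : Ideal L.ringCon.Quotient)).jacobson :=
        Ideal.jacobson_mono bot_le
      have h2 : (Ideal.comap ρ.toRingHom (⊥ : Ideal L.ringCon.Quotient)).jacobson =
          Ideal.comap ρ.toRingHom ((⊥ : Ideal L.ringCon.Quotient)).jacobson :=
        (Ideal.comap_jacobson_of_surjective hρsurj).symm
      have h3 := h1 hx
      rw [h2, hjac2] at h3
      simpa using h3
    intro l hl hlen
    have hpre : ∀ x ∈ l, ∃ y ∈ L, piHat F B B' X u y = x := by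
      intro x hx
      obtain ⟨y, rfl⟩ := hπsurj x
      have h0 : ρ0 y = 0 := by
        rw [← hρπ y]
        exact hmap _ (hl _ hx)
      exact ⟨y, (hρ0ker y).1 h0, rfl⟩
    have hlist : ∀ t : List (Bhat F B B' X u),
        (∀ x ∈ t, ∃ y ∈ L, piHat F B B' X u y = x) →
        ∃ yl : List B', (∀ y ∈ yl, y ∈ L) ∧ yl.map (piHat F B B' X u) = t := by
      intro t
      induction t with
      | nil => exact fun _ => ⟨[], by simp, by simp⟩
      | cons x t ih =>
        intro h
        obtain ⟨yl, hm, hmp⟩ := ih (fun z hz => h z (List.mem_cons_of_mem _ hz))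
        obtain ⟨y, hyL, hyx⟩ := h x (List.mem_cons_self (a := x) (l := t))
        refine ⟨y :: yl, ?_, by simp [hyx, hmp]⟩
        intro z hz
        rcases List.mem_cons.1 hz with rfl | hz
        · exact hyL
        · exact hm z hz
    obtain ⟨yl, hylL, hylmap⟩ := hlist l hpre
    have hyllen : yl.length = u := by
      have := congrArg List.length hylmap
      simpa [hlen] using this
    have hprod : yl.prod ∈ Ione F B B' ⊔ ItwoPow B' X u := by
      have h4 := prod_mem_Ione_sup (F := F) (B := B) (l := yl) (fun y hy => by
        have := hylL y hy
        rwa [hLdef] at this)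
      rwa [hyllen] at h4
    rw [← hylmap, ← map_list_prod]
    exact (piHat_zero_iff _).2 hprod
  exact ⟨part1, bhat_findim ιS huniv u, part3⟩
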